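/- Let G be a group and φ : G → ℝ a homogeneous quasimorphism with defect D_φ. Suppose d, a₁, a₂, a₃, x₁, x₂, x₃ ∈ G satisfy d a₁ a₂ a₃ = x₁ x₂ x₃, the elements d, a₁, a₂, a₃, x₃ pairwise commute, and all of a₁, a₂, a₃, x₁, x₂, x₃ are conjugate in G to a common element. Then |φ(d)| ≤ D_φ. -/
import Mathlib

private lemma aux_zero {a C : ℝ} (h : ∀ n : ℕ, (n : ℝ) * |a| ≤ C) : a = 0 := by
  by_contra ha
  have hpos : 0 < |a| := abs_pos.mpr ha
  obtain ⟨n, hn⟩ := exists_nat_gt (C / |a|)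
  have := h n
  have : (n : ℝ) ≤ C / |a| := (le_div_iff₀ hpos).mpr this
  linarith

private lemma qm_inv {G : Type*} [Group G] (φ : G → ℝ)
    (hhom : ∀ (x : G) (n : ℤ), φ (x ^ n) = n * φ x) (g : G) :
    φ g⁻¹ = -φ g := by
  have := hhom g (-1)
  simpa using this

private lemma qm_conj {G : Type*} [Group G] (φ : G → ℝ) (D : ℝ)
    (hdefect : ∀ x y : G, |φ (x * y) - φ x - φ y| ≤ D)
    (hhom : ∀ (x : G) (n : ℤ), φ (x ^ n) = n * φ x) (g x : G) :
    φ (g * x * g⁻¹) = φ x := by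
  have key : ∀ n : ℕ, (n : ℝ) * |φ (g * x * g⁻¹) - φ x| ≤ 2 * D := by
    intro n
    have hzpow : (g * x * g⁻¹) ^ (n : ℤ) = g * x ^ (n : ℤ) * g⁻¹ := by
      rw [← conj_zpow]
    have h1 : φ ((g * x * g⁻¹) ^ (n : ℤ)) = (n : ℝ) * φ (g * x * g⁻¹) := by
      simpa using hhom (g * x * g⁻¹) n
    have h2 : φ (x ^ (n : ℤ)) = (n : ℝ) * φ x := by simpa using hhom x n
    have hd1 := hdefect g (x ^ (n : ℤ) * g⁻¹)
    have hd2 := hdefect (x ^ (n : ℤ)) g⁻¹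
    have hinv := qm_inv φ hhom g
    have hb : |φ (g * (x ^ (n : ℤ) * g⁻¹)) - φ (x ^ (n : ℤ))| ≤ 2 * D := by
      rw [hinv] at hd2
      calc |φ (g * (x ^ (n : ℤ) * g⁻¹)) - φ (x ^ (n : ℤ))|
          = |(φ (g * (x ^ (n : ℤ) * g⁻¹)) - φ g - φ (x ^ (n : ℤ) * g⁻¹))
            + (φ (x ^ (n : ℤ) * g⁻¹) - φ (x ^ (n : ℤ)) - (-φ g))| := by ring_nf
        _ ≤ _ := by
            refine (abs_add_le _ _).trans ?_
            linarith
    rw [← mul_assoc, ← hzpow, h1, h2] at hb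
    calc (n : ℝ) * |φ (g * x * g⁻¹) - φ x|
        = |(n : ℝ) * (φ (g * x * g⁻¹) - φ x)| := by
          rw [abs_mul, abs_of_nonneg (n.cast_nonneg (α := ℝ))]
      _ = |(n : ℝ) * φ (g * x * g⁻¹) - (n : ℝ) * φ x| := by ring_nf
      _ ≤ 2 * D := hb
  have h0 := aux_zero key
  linarith

private lemma qm_commute {G : Type*} [Group G] (φ : G → ℝ) (D : ℝ)
    (hdefect : ∀ x y : G, |φ (x * y) - φ x - φ y| ≤ D)
    (hhom : ∀ (x : G) (n : ℤ), φ (x ^ n) = n * φ x) {x y : G}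
    (h : Commute x y) : φ (x * y) = φ x + φ y := by
  have key : ∀ n : ℕ, (n : ℝ) * |φ (x * y) - φ x - φ y| ≤ D := by
    intro n
    have hzpow : (x * y) ^ (n : ℤ) = x ^ (n : ℤ) * y ^ (n : ℤ) := h.mul_zpow n
    have hd := hdefect (x ^ (n : ℤ)) (y ^ (n : ℤ))
    rw [← hzpow, hhom (x * y) n, hhom x n, hhom y n] at hd
    calc (n : ℝ) * |φ (x * y) - φ x - φ y|
        = |(n : ℝ) * (φ (x * y) - φ x - φ y)| := by
          rw [abs_mul, abs_of_nonneg (n.cast_nonneg (α := ℝ))]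
      _ = |(n : ℝ) * φ (x * y) - (n : ℝ) * φ x - (n : ℝ) * φ y| := by ring_nf
      _ ≤ D := by simpa using hd
  have h0 := aux_zero key
  linarith

theorem stmt_10 {G : Type*} [Group G] (φ : G → ℝ) (D : ℝ)
    (hdefect : ∀ x y : G, |φ (x * y) - φ x - φ y| ≤ D)
    (hhom : ∀ (x : G) (n : ℤ), φ (x ^ n) = n * φ x)
    (d a₁ a₂ a₃ x₁ x₂ x₃ : G)
    (hrel : d * a₁ * a₂ * a₃ = x₁ * x₂ * x₃)
    (hcomm : [d, a₁, a₂, a₃, x₃].Pairwise Commute)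
    (hconj : ∃ z : G, ∀ w ∈ [a₁, a₂, a₃, x₁, x₂, x₃], IsConj z w) :
    |φ d| ≤ D := by
  obtain ⟨z, hz⟩ := hconj
  have hval : ∀ w ∈ [a₁, a₂, a₃, x₁, x₂, x₃], φ w = φ z := by
    intro w hw
    obtain ⟨c, hc⟩ := isConj_iff.mp (hz w hw)
    rw [← hc, qm_conj φ D hdefect hhom]
  have hva₁ : φ a₁ = φ z := hval a₁ (by simp)
  have hva₂ : φ a₂ = φ z := hval a₂ (by simp)
  have hva₃ : φ a₃ = φ z := hval a₃ (by simp)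
  have hvx₁ : φ x₁ = φ z := hval x₁ (by simp)
  have hvx₂ : φ x₂ = φ z := hval x₂ (by simp)
  have hvx₃ : φ x₃ = φ z := hval x₃ (by simp)
  simp only [List.pairwise_cons, List.mem_cons, List.not_mem_nil, or_false, forall_eq_or_imp,
    forall_eq, List.Pairwise.nil, and_true, IsEmpty.forall_iff, implies_true,
    List.mem_singleton] at hcomm
  obtain ⟨⟨hda₁, hda₂, hda₃, hdx₃⟩, ⟨ha₁a₂, ha₁a₃, ha₁x₃⟩, ⟨ha₂a₃, ha₂x₃⟩, ha₃x₃⟩ := hcomm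
  have hL : φ (d * a₁ * a₂ * a₃) = φ d + φ a₁ + φ a₂ + φ a₃ := by
    rw [qm_commute φ D hdefect hhom ((hda₃.mul_left ha₁a₃).mul_left ha₂a₃),
        qm_commute φ D hdefect hhom (hda₂.mul_left ha₁a₂),
        qm_commute φ D hdefect hhom hda₁]
  have hx₃rhs : Commute x₃ (x₁ * x₂ * x₃) := by
    rw [← hrel]
    exact (((hdx₃.symm.mul_right ha₁x₃.symm).mul_right ha₂x₃.symm).mul_right ha₃x₃.symm)
  have hx₁x₂ : Commute (x₁ * x₂) x₃ := by
    have h := hx₃rhs.mul_right (Commute.refl x₃).inv_right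
    rw [mul_inv_cancel_right] at h
    exact h.symm
  have hR : φ (x₁ * x₂ * x₃) = φ (x₁ * x₂) + φ x₃ :=
    qm_commute φ D hdefect hhom hx₁x₂
  have heq : φ d + φ a₁ + φ a₂ + φ a₃ = φ (x₁ * x₂) + φ x₃ := by
    rw [← hL, ← hR, hrel]
  have hfinal : φ d = φ (x₁ * x₂) - φ x₁ - φ x₂ := by
    rw [hva₁, hva₂, hva₃] at heq
    rw [hvx₁, hvx₂]
    rw [hvx₃] at heq
    linarith
  rw [hfinal]
  exact hdefect x₁ x₂
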